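/- Let F be a field, let n be a natural number, and let z, z_1, …, z_n ∈ F satisfy z ≠ 0 and z + z_k ≠ 0 for every k with 1 ≤ k ≤ n. Then 1/z = ∑_{k=1}^{n} (z_1·z_2⋯z_{k−1})/((z+z_1)(z+z_2)⋯(z+z_k)) + (z_1·z_2⋯z_n)/(z·(z+z_1)(z+z_2)⋯(z+z_n)), where the numerator product z_1⋯z_{k−1} is empty (equal to 1) when k = 1. -/

import Mathlib

/-- Nicole's partial-fraction identity: in a field `F`, if `z ≠ 0` and
`z + z_k ≠ 0` for `1 ≤ k ≤ n`, then
`1/z = ∑_{k=1}^n z₁⋯z_{k-1}/((z+z₁)⋯(z+z_k)) + z₁⋯z_n/(z(z+z₁)⋯(z+z_n))`. -/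
theorem stmt_15 (F : Type*) [Field F] (n : ℕ) (z : F) (zs : ℕ → F)
    (hz : z ≠ 0) (hzk : ∀ k : ℕ, 1 ≤ k → k ≤ n → z + zs k ≠ 0) :
    1 / z =
      (∑ k ∈ Finset.Icc 1 n,
        (∏ j ∈ Finset.Ico 1 k, zs j) / ∏ j ∈ Finset.Icc 1 k, (z + zs j)) +
      (∏ j ∈ Finset.Icc 1 n, zs j) / (z * ∏ j ∈ Finset.Icc 1 n, (z + zs j)) := by
  induction n with
  | zero => simp [hz]
  | succ n ih =>
    have h1 : ∀ k : ℕ, 1 ≤ k → k ≤ n → z + zs k ≠ 0 := fun k hk hk' =>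
      hzk k hk (hk'.trans (Nat.le_succ n))
    have ih' := ih h1
    have hmem : (n + 1) ∉ Finset.Icc 1 n := by simp
    have hE : Finset.Icc 1 (n+1) = insert (n+1) (Finset.Icc 1 n) :=
      (Finset.insert_Icc_right_eq_Icc_add_one (by omega)).symm
    rw [hE, Finset.sum_insert hmem, hE, Finset.prod_insert hmem, Finset.prod_insert hmem]
    have hP : (∏ j ∈ Finset.Icc 1 n, (z + zs j)) ≠ 0 :=
      Finset.prod_ne_zero_iff.2 fun j hj => h1 j (Finset.mem_Icc.1 hj).1 (Finset.mem_Icc.1 hj).2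
    have hlast : z + zs (n+1) ≠ 0 := hzk (n+1) (by omega) le_rfl
    have hIco : Finset.Ico 1 (n+1) = Finset.Icc 1 n := by
      rw [Finset.Ico_add_one_right_eq_Icc]
    rw [ih', hIco]
    field_simp
    ring
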